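/- Existence of a bounded positive λ-subharmonic function under rapid branching: let G be an infinite, locally finite, connected graph with fixed vertex x₀ such that Σ_{r≥1} m̄₋(r)/m̲₊(r) < ∞, where m̲₊(r) is the minimum over x ∈ S_r(x₀) of the number of neighbors of x in S_{r+1}(x₀) and m̄₋(r) is the maximum over x ∈ S_r(x₀) of the number of neighbors in S_{r−1}(x₀). Then for every λ < 0 there exists a bounded, positive function v on the vertices, depending only on distance from x₀, such that Δv(x) ≤ λv(x) for all x. -/

import Mathlib

open Finset

/-- The graph Laplacian `Δf(x) = ∑_{y ∼ x} (f(x) - f(y))`. -/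
def graphLap {V : Type*} (G : SimpleGraph V) [G.LocallyFinite] (f : V → ℝ) (x : V) : ℝ :=
  ∑ y ∈ G.neighborFinset x, (f x - f y)

/-- `m_{+1}(x)`: the number of neighbors of `x` in the next sphere about `x₀`. -/
noncomputable def mPlus {V : Type*} (G : SimpleGraph V) [G.LocallyFinite] (x₀ x : V) : ℕ :=
  ((G.neighborFinset x).filter (fun y => G.dist x₀ y = G.dist x₀ x + 1)).card

/-- `m_{-1}(x)`: the number of neighbors of `x` in the previous sphere about `x₀`. -/
noncomputable def mMinus {V : Type*} (G : SimpleGraph V) [G.LocallyFinite] (x₀ x : V) : ℕ :=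
  ((G.neighborFinset x).filter (fun y => G.dist x₀ y + 1 = G.dist x₀ x)).card

lemma descend_aux {V : Type*} (G : SimpleGraph V) (hG : G.Connected) (x₀ x : V) (n : ℕ)
    (h : G.dist x₀ x = n + 1) : ∃ y, G.Adj x y ∧ G.dist x₀ y = n := by
  obtain ⟨p, hp⟩ := (hG x₀ x).exists_walk_length_eq_dist
  rw [h] at hp
  have hq : p.reverse.length = n + 1 := by simp [hp]
  cases hrev : p.reverse with
  | nil => rw [hrev] at hq; simp at hq
  | @cons _ y _ hadj q =>
    rw [hrev] at hq
    simp only [SimpleGraph.Walk.length_cons, Nat.add_right_cancel_iff] at hq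
    have h1 : G.dist x₀ y ≤ n := by
      have := SimpleGraph.dist_le q.reverse
      simpa [hq] using this
    have h2 : n + 1 ≤ G.dist x₀ y + 1 := by
      calc n + 1 = G.dist x₀ x := h.symm
      _ ≤ G.dist x₀ y + G.dist y x := hG.dist_triangle
      _ ≤ G.dist x₀ y + 1 := by
          have : G.dist y x = 1 := SimpleGraph.dist_eq_one_iff_adj.mpr hadj.symm
          omega
    exact ⟨y, hadj, by omega⟩

lemma ball_finite {V : Type*} (G : SimpleGraph V) [G.LocallyFinite] (hG : G.Connected) (x₀ : V) :
    ∀ n, {x : V | G.dist x₀ x ≤ n}.Finite := by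
  intro n
  induction n with
  | zero =>
    apply Set.Finite.subset (Set.finite_singleton x₀)
    intro x hx
    simp only [Set.mem_setOf_eq, Nat.le_zero] at hx
    simp [(hG.dist_eq_zero_iff.mp hx).symm]
  | succ n ih =>
    apply Set.Finite.subset (ih.union (Set.Finite.biUnion ih (fun y _ => (G.neighborSet y).toFinite)))
    intro x hx
    simp only [Set.mem_setOf_eq] at hx
    rcases Nat.lt_or_ge (G.dist x₀ x) (n+1) with h | h
    · exact Or.inl (by simpa using Nat.lt_succ_iff.mp h)
    · have hx' : G.dist x₀ x = n + 1 := le_antisymm hx h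
      obtain ⟨y, hadj, hy⟩ := descend_aux G hG x₀ x n hx'
      right
      refine Set.mem_biUnion (show y ∈ {x : V | G.dist x₀ x ≤ n} by simp [hy]) ?_
      exact hadj.symm

lemma exists_dist_eq' {V : Type*} [Infinite V] (G : SimpleGraph V) [G.LocallyFinite]
    (hG : G.Connected) (x₀ : V) : ∀ n, ∃ x, G.dist x₀ x = n := by
  have hup : ∀ n : ℕ, ∃ x, n ≤ G.dist x₀ x := by
    intro n
    by_contra hcon
    push_neg at hcon
    have hfin : (Set.univ : Set V).Finite :=
      (ball_finite G hG x₀ n).subset (fun x _ => le_of_lt (hcon x))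
    exact Set.infinite_univ hfin
  have hdown : ∀ k n : ℕ, (∃ x, G.dist x₀ x = n + k) → ∃ x, G.dist x₀ x = n := by
    intro k
    induction k with
    | zero => simpa using fun n h => h
    | succ k ih =>
      rintro n ⟨x, hx⟩
      obtain ⟨y, -, hy⟩ := descend_aux G hG x₀ x (n + k) (by omega)
      exact ih n ⟨y, hy⟩
  intro n
  obtain ⟨x, hx⟩ := hup n
  exact hdown (G.dist x₀ x - n) n ⟨x, by omega⟩

/-- **Existence of a bounded positive λ-subharmonic function under rapid branching.**
Let `G` be an infinite, locally finite, connected graph with fixed vertex `x₀`, and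
suppose `m̲₊(r) ≤ m_{+1}(x)` and `m_{-1}(x) ≤ m̄₋(r)` for every `x ∈ S_r(x₀)`, with
`m̲₊(r) > 0`, `m̄₋(r) ≥ 0`, and `∑_{r} m̄₋(r)/m̲₊(r) < ∞`.  Then for every `λ < 0`
there is a bounded positive function `v`, depending only on the distance from `x₀`,
with `Δv(x) ≤ λ v(x)` for all `x`. -/
theorem exists_bounded_subharmonic {V : Type*} [Infinite V] (G : SimpleGraph V)
    [G.LocallyFinite] (hG : G.Connected) (x₀ : V)
    (mlow mbar : ℕ → ℝ) (hlow : ∀ r, 0 < mlow r) (hbar : ∀ r, 0 ≤ mbar r)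
    (hlow_le : ∀ x : V, mlow (G.dist x₀ x) ≤ (mPlus G x₀ x : ℝ))
    (hbar_ge : ∀ x : V, (mMinus G x₀ x : ℝ) ≤ mbar (G.dist x₀ x))
    (hsum : Summable (fun r : ℕ => mbar r / mlow r))
    (l : ℝ) (hl : l < 0) :
    ∃ v : V → ℝ, ∃ C : ℝ,
      (∀ x, 0 < v x) ∧ (∀ x, v x ≤ C) ∧
      (∀ x y : V, G.dist x₀ x = G.dist x₀ y → v x = v y) ∧
      (∀ x, graphLap G v x ≤ l * v x) := by
  have hlpos : (0:ℝ) < -l := by linarith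
  set b : ℕ → ℝ := fun r : ℕ => mbar r / mlow r with hbdef
  have hb0 : ∀ r, 0 ≤ b r := fun r => div_nonneg (hbar r) (hlow r).le
  -- spheres are nonempty, so mbar (n+1) ≥ 1
  have hmbar1 : ∀ n : ℕ, 1 ≤ mbar (n + 1) := by
    intro n
    obtain ⟨x, hx⟩ := exists_dist_eq' G hG x₀ (n + 1)
    obtain ⟨y, hadj, hy⟩ := descend_aux G hG x₀ x n hx
    have hmem : y ∈ (G.neighborFinset x).filter (fun y => G.dist x₀ y + 1 = G.dist x₀ x) := by
      simp [SimpleGraph.mem_neighborFinset, hadj, hx, hy]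
    have h1 : 1 ≤ mMinus G x₀ x := by
      have := Finset.card_pos.mpr ⟨y, hmem⟩
      unfold mMinus; omega
    calc (1:ℝ) ≤ (mMinus G x₀ x : ℝ) := by exact_mod_cast h1
    _ ≤ mbar (G.dist x₀ x) := hbar_ge x
    _ = mbar (n+1) := by rw [hx]
  -- the increment ratios d
  set d : ℕ → ℝ := fun n =>
    Nat.rec ((-l) / mlow 0) (fun n dn => b (n+1) * dn + (-l) / mlow (n+1)) n with hddef
  have hd0 : d 0 = (-l) / mlow 0 := rfl
  have hdsucc : ∀ n, d (n+1) = b (n+1) * d n + (-l) / mlow (n+1) := fun n => rfl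
  have hdpos : ∀ n, 0 < d n := by
    intro n
    induction n with
    | zero => exact div_pos hlpos (hlow 0)
    | succ n ih =>
      rw [hdsucc]
      have h1 := div_pos hlpos (hlow (n+1))
      nlinarith [mul_nonneg (hb0 (n+1)) ih.le]
  have hc : ∀ n : ℕ, (-l) / mlow (n+1) ≤ (-l) * b (n+1) := by
    intro n
    have h1 : 1 / mlow (n+1) ≤ b (n+1) := by
      rw [hbdef]
      exact (div_le_div_iff_of_pos_right (hlow (n+1))).mpr (hmbar1 n)
    calc (-l) / mlow (n+1) = (-l) * (1 / mlow (n+1)) := by ring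
    _ ≤ (-l) * b (n+1) := mul_le_mul_of_nonneg_left h1 hlpos.le
  -- a tail where b is small
  obtain ⟨R, hR⟩ : ∃ R : ℕ, ∀ n ≥ R, b n ≤ 1/2 := by
    have htend : Filter.Tendsto b Filter.atTop (nhds 0) := hsum.tendsto_atTop_zero
    have hev : ∀ᶠ n in Filter.atTop, b n ≤ 1/2 :=
      htend.eventually_le_const (by norm_num)
    exact Filter.eventually_atTop.mp hev
  -- d is bounded
  have hnR : (Finset.range (R+1)).Nonempty := Finset.nonempty_range_iff.mpr (Nat.succ_ne_zero R)
  set M : ℝ := max ((Finset.range (R+1)).sup' hnR d) (-l) with hMdef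
  have hdRM : d R ≤ (Finset.range (R+1)).sup' hnR d :=
    Finset.le_sup' d (Finset.mem_range.mpr (Nat.lt_succ_self R))
  have hdtail : ∀ n, R ≤ n → d n ≤ max (d R) (-l) := by
    intro n hn
    induction n, hn using Nat.le_induction with
    | base => exact le_max_left _ _
    | succ n hn ih =>
      rw [hdsucc]
      have hb2 : b (n+1) ≤ 1/2 := hR (n+1) (by omega)
      have h1 : b (n+1) * d n ≤ (1/2) * max (d R) (-l) :=
        mul_le_mul hb2 ih (hdpos n).le (by norm_num)
      have h2 : (-l) / mlow (n+1) ≤ (-l) * (1/2) :=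
        (hc n).trans (mul_le_mul_of_nonneg_left hb2 hlpos.le)
      have h3 : -l ≤ max (d R) (-l) := le_max_right _ _
      linarith
  have hM : ∀ n, d n ≤ M := by
    intro n
    rcases le_or_gt n R with h | h
    · exact le_trans (Finset.le_sup' d (Finset.mem_range.mpr (by omega))) (le_max_left _ _)
    · refine (hdtail n h.le).trans (max_le_max ?_ le_rfl)
      exact hdRM
  have hMl : 0 < M := lt_of_lt_of_le hlpos (le_max_right _ _)
  -- d is summable
  have hsumb : Summable b := hsum
  have hs1 : Summable (fun n : ℕ => (M - l) * b (n+1)) :=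
    (((summable_nat_add_iff 1).mpr hsumb)).mul_left _
  have hs2 : Summable (fun n : ℕ => d (n+1)) := by
    apply Summable.of_nonneg_of_le (fun n => (hdpos (n+1)).le) _ hs1
    intro n
    rw [hdsucc]
    have h1 : b (n+1) * d n ≤ b (n+1) * M := mul_le_mul_of_nonneg_left (hM n) (hb0 (n+1))
    have h2 := hc n
    nlinarith [hb0 (n+1)]
  have hsd : Summable d := (summable_nat_add_iff 1).mp hs2
  set D : ℝ := ∑' n, d n with hDdef
  have hDn : ∀ n, ∑ k ∈ Finset.range n, d k ≤ D :=
    fun n => Summable.sum_le_tsum _ (fun k _ => (hdpos k).le) hsd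
  -- the radial function f
  set f : ℕ → ℝ := fun n => ∏ k ∈ Finset.range n, (1 + d k) with hfdef
  have hf1 : ∀ n, 1 ≤ f n := by
    intro n
    show (1:ℝ) ≤ ∏ k ∈ Finset.range n, (1 + d k)
    calc (1:ℝ) = ∏ _k ∈ Finset.range n, (1:ℝ) := by simp
    _ ≤ ∏ k ∈ Finset.range n, (1 + d k) :=
      Finset.prod_le_prod (by intros; norm_num) (fun k _ => by linarith [hdpos k])
  have hfsucc : ∀ n, f (n+1) = f n * (1 + d n) := by
    intro n
    rw [hfdef]
    exact Finset.prod_range_succ _ n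
  have hfmono : Monotone f := by
    apply monotone_nat_of_le_succ
    intro n
    rw [hfsucc]
    nlinarith [hf1 n, hdpos n]
  have hfC : ∀ n, f n ≤ Real.exp D := by
    intro n
    calc f n ≤ ∏ k ∈ Finset.range n, Real.exp (d k) := by
          apply Finset.prod_le_prod
          · intro k _; linarith [hdpos k]
          · intro k _; linarith [Real.add_one_le_exp (d k)]
    _ = Real.exp (∑ k ∈ Finset.range n, d k) := (Real.exp_sum _ _).symm
    _ ≤ Real.exp D := Real.exp_le_exp.mpr (hDn n)
  -- the function v
  refine ⟨fun x => f (G.dist x₀ x), Real.exp D,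
    fun x => lt_of_lt_of_le one_pos (hf1 _), fun x => hfC _,
    fun x y h => congrArg f h, ?_⟩
  intro x
  show graphLap G (fun x => f (G.dist x₀ x)) x ≤ l * f (G.dist x₀ x)
  set r : ℕ := G.dist x₀ x with hrdef
  -- trichotomy for neighbors
  have htri : ∀ y ∈ G.neighborFinset x,
      G.dist x₀ y + 1 = r ∨ G.dist x₀ y = r ∨ G.dist x₀ y = r + 1 := by
    intro y hy
    rw [SimpleGraph.mem_neighborFinset] at hy
    have e1 : G.dist x y = 1 := SimpleGraph.dist_eq_one_iff_adj.mpr hy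
    have e2 : G.dist y x = 1 := SimpleGraph.dist_eq_one_iff_adj.mpr hy.symm
    have h1 : G.dist x₀ y ≤ G.dist x₀ x + G.dist x y := hG.dist_triangle
    have h2 : G.dist x₀ x ≤ G.dist x₀ y + G.dist y x := hG.dist_triangle
    omega
  -- compute the Laplacian
  have key : graphLap G (fun x => f (G.dist x₀ x)) x
      = (mMinus G x₀ x : ℝ) * (f r - f (r-1)) + (mPlus G x₀ x : ℝ) * (f r - f (r+1)) := by
    unfold graphLap mMinus mPlus
    rw [show ((((G.neighborFinset x).filter
        (fun y => G.dist x₀ y + 1 = G.dist x₀ x)).card : ℝ) * (f r - f (r-1)))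
      = ∑ y ∈ G.neighborFinset x,
          (if G.dist x₀ y + 1 = G.dist x₀ x then f r - f (r-1) else 0) by
        rw [← Finset.sum_filter, Finset.sum_const, nsmul_eq_mul]]
    rw [show ((((G.neighborFinset x).filter
        (fun y => G.dist x₀ y = G.dist x₀ x + 1)).card : ℝ) * (f r - f (r+1)))
      = ∑ y ∈ G.neighborFinset x,
          (if G.dist x₀ y = G.dist x₀ x + 1 then f r - f (r+1) else 0) by
        rw [← Finset.sum_filter, Finset.sum_const, nsmul_eq_mul]]
    rw [← Finset.sum_add_distrib]
    apply Finset.sum_congr rfl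
    intro y hy
    beta_reduce
    rcases htri y hy with h | h | h
    · rw [if_pos (by omega), if_neg (by omega)]
      have hy1 : G.dist x₀ y = r - 1 := by omega
      rw [hy1, ← hrdef]
      ring
    · rw [if_neg (by omega), if_neg (by omega)]
      rw [h, ← hrdef]
      ring
    · rw [if_neg (by omega), if_pos (by omega)]
      rw [h, ← hrdef]
      ring
  rw [key]
  have hfr1 : f r - f (r+1) = -(d r * f r) := by rw [hfsucc]; ring
  have hminus : (mMinus G x₀ x : ℝ) * (f r - f (r-1)) ≤ mbar r * (f r - f (r-1)) := by
    apply mul_le_mul_of_nonneg_right (hbar_ge x)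
    have := hfmono (Nat.sub_le r 1)
    linarith
  have hplus : (mPlus G x₀ x : ℝ) * (f r - f (r+1)) ≤ mlow r * (f r - f (r+1)) := by
    rw [hfr1]
    have h1 : mlow r ≤ (mPlus G x₀ x : ℝ) := hlow_le x
    have h2 : 0 < d r * f r := mul_pos (hdpos r) (lt_of_lt_of_le one_pos (hf1 r))
    nlinarith
  have hstep : (mMinus G x₀ x : ℝ) * (f r - f (r-1)) + (mPlus G x₀ x : ℝ) * (f r - f (r+1))
      ≤ mbar r * (f r - f (r-1)) - mlow r * (d r * f r) := by
    rw [hfr1] at hplus ⊢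
    linarith
  refine hstep.trans ?_
  -- final estimate, split on r
  match hrcase : r with
  | 0 =>
    have hf0 : f 0 = 1 := by rw [hfdef]; simp
    have : f (0-1) = f 0 := rfl
    rw [this, hf0, hd0]
    have hml := hlow 0
    field_simp
    linarith
  | (n+1) =>
    have e1 : f (n+1) - f ((n+1)-1) = d n * f n := by
      have : (n+1) - 1 = n := rfl
      rw [this, hfsucc]; ring
    rw [e1]
    have e2 : mlow (n+1) * (d (n+1) * f (n+1))
        = mbar (n+1) * d n * f (n+1) + (-l) * f (n+1) := by
      rw [hdsucc, hbdef]
      have := (hlow (n+1)).ne'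
      field_simp
    rw [e2]
    have h3 : mbar (n+1) * d n * f n ≤ mbar (n+1) * d n * f (n+1) := by
      apply mul_le_mul_of_nonneg_left (hfmono (Nat.le_succ n))
      exact mul_nonneg (hbar _) (hdpos n).le
    linarith
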